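/- For every integer n ≥ 8, setting m = ⌊(π/√2)√n⌋, one has −cos(3π/m) > −1 + 7/n; consequently the Chebyshev–Lobatto node x_3^{CL} = −cos(3π/m) is strictly closer to x_{4,n} = −1 + 8/n than to x_{3,n} = −1 + 6/n. -/

import Mathlib

open Real

/-- Chord bound for `sin` on `[0, π/4]`. -/
lemma chord_sin {y : ℝ} (h0 : 0 ≤ y) (h1 : y ≤ π / 4) :
    Real.sqrt 2 * 2 / π * y ≤ Real.sin y := by
  have hπ := Real.pi_pos
  have hb : 0 ≤ 4 * y / π := by positivity
  have ha : 0 ≤ 1 - 4 * y / π := by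
    rw [sub_nonneg, div_le_one hπ]; linarith
  have h := strictConcaveOn_sin_Icc.concaveOn.2 (x := 0) (y := π / 4)
    ⟨le_rfl, hπ.le⟩ ⟨by positivity, by linarith⟩ ha hb (by ring)
  have harg : (1 - 4 * y / π) • (0 : ℝ) + (4 * y / π) • (π / 4) = y := by
    simp only [smul_eq_mul]
    field_simp
    ring
  rw [harg] at h
  have heq : (1 - 4 * y / π) • Real.sin 0 + (4 * y / π) • Real.sin (π / 4)
      = Real.sqrt 2 * 2 / π * y := by
    rw [Real.sin_zero, Real.sin_pi_div_four]
    simp only [smul_eq_mul]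
    field_simp
    ring
  linarith [heq ▸ h]

set_option maxHeartbeats 1000000 in
/-- For every `n ≥ 8`, with `m = ⌊(π/√2)√n⌋`, one has
`−cos(3π/m) > −1 + 7/n`; consequently the Chebyshev–Lobatto node
`x_3^{CL} = −cos(3π/m)` is strictly closer to `x_{4,n} = −1 + 8/n` than to
`x_{3,n} = −1 + 6/n`. -/
theorem third_chebyshev_node_closer_to_fourth_equispaced
    (n : ℕ) (hn : 8 ≤ n) (m : ℕ)
    (hm : m = ⌊Real.pi / Real.sqrt 2 * Real.sqrt n⌋₊) :
    -Real.cos (3 * Real.pi / m) > -1 + 7 / (n : ℝ) ∧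
      |(-Real.cos (3 * Real.pi / m)) - (-1 + 8 / (n : ℝ))| <
        |(-Real.cos (3 * Real.pi / m)) - (-1 + 6 / (n : ℝ))| := by
  have hπ := Real.pi_pos
  have hπ3 := Real.pi_gt_three
  have hπ315 := Real.pi_lt_d2
  have hπ2 : π ^ 2 < 9.9225 := by nlinarith
  have hn8 : (8 : ℝ) ≤ (n : ℝ) := by exact_mod_cast hn
  have hn0 : (0 : ℝ) < n := by linarith
  have hs2 : (0 : ℝ) < Real.sqrt 2 := Real.sqrt_pos.2 (by norm_num)
  have hsn : (0 : ℝ) < Real.sqrt n := Real.sqrt_pos.2 hn0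
  set v : ℝ := π / Real.sqrt 2 * Real.sqrt n with hv
  clear_value v
  have hv0 : 0 < v := by rw [hv]; positivity
  -- √8 = 2√2
  have h8 : Real.sqrt 8 = 2 * Real.sqrt 2 := by
    rw [show (8 : ℝ) = 2 ^ 2 * 2 by norm_num, Real.sqrt_mul (by positivity),
      Real.sqrt_sq (by norm_num)]
  have hsn8 : 2 * Real.sqrt 2 ≤ Real.sqrt n := by
    rw [← h8]; exact Real.sqrt_le_sqrt hn8
  -- v ≥ 2π ≥ 6
  have hv6 : (6 : ℝ) ≤ v := by
    have h1 : π / Real.sqrt 2 * (2 * Real.sqrt 2) ≤ v := by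
      rw [hv]; exact mul_le_mul_of_nonneg_left hsn8 (by positivity)
    have h2 : π / Real.sqrt 2 * (2 * Real.sqrt 2) = 2 * π := by
      field_simp
    rw [h2] at h1; linarith
  have hm6 : 6 ≤ m := by
    rw [hm]; exact Nat.le_floor (by exact_mod_cast hv6)
  have hm0 : (0 : ℝ) < m := by exact_mod_cast Nat.lt_of_lt_of_le (by norm_num) hm6
  have hmr6 : (6 : ℝ) ≤ (m : ℝ) := by exact_mod_cast hm6
  have hmv : (m : ℝ) ≤ v := by rw [hm]; exact Nat.floor_le hv0.le
  set x : ℝ := 3 * π / m with hxdef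
  clear_value x
  have hx0 : 0 < x := by rw [hxdef]; positivity
  -- x ≤ π/2
  have hxle : x ≤ π / 2 := by
    rw [hxdef, div_le_iff₀ hm0]
    nlinarith
  -- x ≥ 3√2/√n
  have hxge : 3 * Real.sqrt 2 / Real.sqrt n ≤ x := by
    have h1 : 3 * π / v ≤ 3 * π / m :=
      div_le_div_of_nonneg_left (by positivity) hm0 hmv
    have h2 : 3 * π / v = 3 * Real.sqrt 2 / Real.sqrt n := by
      rw [hv]; field_simp
    rw [← hxdef, h2] at h1; exact h1
  -- x² ≥ 18/n
  have hx2 : 18 / (n : ℝ) ≤ x ^ 2 := by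
    have hsq : (3 * Real.sqrt 2 / Real.sqrt n) ^ 2 = 18 / n := by
      rw [div_pow, mul_pow, Real.sq_sqrt (by norm_num : (0:ℝ) ≤ 2),
        Real.sq_sqrt hn0.le]
      norm_num
    calc 18 / (n : ℝ) = (3 * Real.sqrt 2 / Real.sqrt n) ^ 2 := hsq.symm
      _ ≤ x ^ 2 := pow_le_pow_left₀ (by positivity) hxge 2
  have hx2' : 18 ≤ x ^ 2 * n := (div_le_iff₀ hn0).1 hx2
  -- chord bound on sin (x/2)
  have hchord : Real.sqrt 2 * 2 / π * (x / 2) ≤ Real.sin (x / 2) :=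
    chord_sin (by positivity) (by linarith)
  have hsin_sq : 2 * x ^ 2 / π ^ 2 ≤ Real.sin (x / 2) ^ 2 := by
    have h := pow_le_pow_left₀ (by positivity) hchord 2
    have hsq2 : Real.sqrt 2 ^ 2 = 2 := Real.sq_sqrt (by norm_num)
    have heq : (Real.sqrt 2 * 2 / π * (x / 2)) ^ 2 = Real.sqrt 2 ^ 2 * x ^ 2 / π ^ 2 := by
      ring
    rw [heq, hsq2] at h
    linarith
  -- half-angle: cos x = 1 - 2 sin(x/2)²
  have hhalf : Real.cos x = 1 - 2 * Real.sin (x / 2) ^ 2 := by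
    have h := Real.sin_sq_eq_half_sub (x / 2)
    rw [show 2 * (x / 2) = x by ring] at h
    linarith
  -- conclude first part
  have hπ2pos : (0 : ℝ) < π ^ 2 := by positivity
  have hs : 2 * x ^ 2 ≤ Real.sin (x / 2) ^ 2 * π ^ 2 := (div_le_iff₀ hπ2pos).1 hsin_sq
  have key : 36 ≤ Real.sin (x / 2) ^ 2 * (n : ℝ) * π ^ 2 := by
    nlinarith [mul_le_mul_of_nonneg_right hs hn0.le]
  have hfin : 7 < 2 * (Real.sin (x / 2) ^ 2 * (n : ℝ)) := by
    by_contra hcon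
    push_neg at hcon
    have h1 : 2 * (Real.sin (x / 2) ^ 2 * (n : ℝ)) * π ^ 2 ≤ 7 * π ^ 2 :=
      mul_le_mul_of_nonneg_right hcon hπ2pos.le
    linarith only [key, h1, hπ2]
  have hmain : Real.cos x < 1 - 7 / (n : ℝ) := by
    rw [hhalf]
    have h7 : 7 / (n : ℝ) < 2 * Real.sin (x / 2) ^ 2 := by
      rw [div_lt_iff₀ hn0]; linarith only [hfin]
    linarith only [h7]
  have hfirst : -Real.cos x > -1 + 7 / (n : ℝ) := by linarith
  refine ⟨hfirst, ?_⟩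
  have hninv : 0 < 1 / (n : ℝ) := by positivity
  rw [show (8:ℝ)/n = 8*(1/(n:ℝ)) by ring, show (6:ℝ)/n = 6*(1/(n:ℝ)) by ring]
  rw [show (7:ℝ)/n = 7*(1/(n:ℝ)) by ring] at hfirst
  set c : ℝ := -Real.cos x with hc
  clear_value c
  rcases abs_cases (c - (-1 + 8 * (1/(n : ℝ)))) with ⟨he, he'⟩ | ⟨he, he'⟩ <;>
    rcases abs_cases (c - (-1 + 6 * (1/(n : ℝ)))) with ⟨hf, hf'⟩ | ⟨hf, hf'⟩ <;>
    rw [he, hf] <;>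
    linarith only [hfirst, hninv, he', hf']
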